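/- Let ξ > 0 be such that D_ξ := DᵀD − ξ²I is invertible, and let ω ≥ 0 be such that A(iω) is invertible. Then ξ is a singular value of G(iω), i.e. det(G(iω)* G(iω) − ξ² I) = 0, if and only if λ = iω is an eigenvalue of the operator L_ξ, i.e. there exists a continuously differentiable function u : [−τ_max, τ_max] → ℂ^{2n}, not identically zero, with u′(t) = iω·u(t) for all t ∈ [−τ_max, τ_max] and u′(0) = M_0 u(0) + Σ_{i=1}^m (M_i u(−τ_i) + M_{−i} u(τ_i)). -/

import Mathlib

open Matrix Complex

noncomputable section

variable {n nu ny m : ℕ}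

/-- `D_ξ = Dᵀ D − ξ² I`. -/
def Dxi (D : Matrix (Fin ny) (Fin nu) ℝ) (ξ : ℝ) : Matrix (Fin nu) (Fin nu) ℝ :=
  Dᵀ * D - ξ ^ 2 • (1 : Matrix (Fin nu) (Fin nu) ℝ)

/-- `(Dᵀ)_ξ = D Dᵀ − ξ² I`, the matrix denoted `D_ξ^{-T}`-inverse base in the paper
(the only dimensionally consistent reading of the `(2,1)` block of `M₀`).
Note that it is invertible iff `D_ξ` is (for `ξ ≠ 0`), since `DᵀD` and `DDᵀ` have the
same nonzero eigenvalues. -/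
def DxiT (D : Matrix (Fin ny) (Fin nu) ℝ) (ξ : ℝ) : Matrix (Fin ny) (Fin ny) ℝ :=
  D * Dᵀ - ξ ^ 2 • (1 : Matrix (Fin ny) (Fin ny) ℝ)

/-- The block matrix `M₀`. -/
def Mzero (A0 : Matrix (Fin n) (Fin n) ℝ) (B : Matrix (Fin n) (Fin nu) ℝ)
    (C : Matrix (Fin ny) (Fin n) ℝ) (D : Matrix (Fin ny) (Fin nu) ℝ) (ξ : ℝ) :
    Matrix (Fin n ⊕ Fin n) (Fin n ⊕ Fin n) ℝ :=
  fromBlocks (A0 - B * (Dxi D ξ)⁻¹ * Dᵀ * C) (-(B * (Dxi D ξ)⁻¹ * Bᵀ))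
    (ξ ^ 2 • (Cᵀ * (DxiT D ξ)⁻¹ * C)) (-A0ᵀ + Cᵀ * D * (Dxi D ξ)⁻¹ * Bᵀ)

/-- The block matrix `Mᵢ` for `1 ≤ i ≤ m`. -/
def Mpos (Ai : Matrix (Fin n) (Fin n) ℝ) : Matrix (Fin n ⊕ Fin n) (Fin n ⊕ Fin n) ℝ :=
  fromBlocks Ai 0 0 0

/-- The block matrix `M₋ᵢ` for `1 ≤ i ≤ m`. -/
def Mneg (Ai : Matrix (Fin n) (Fin n) ℝ) : Matrix (Fin n ⊕ Fin n) (Fin n ⊕ Fin n) ℝ :=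
  fromBlocks 0 0 0 (-Aiᵀ)

/-- `H_ξ(λ) = λI − M₀ − Σᵢ (Mᵢ e^{−λτᵢ} + M₋ᵢ e^{λτᵢ})`. -/
def Hxi (A0 : Matrix (Fin n) (Fin n) ℝ) (A : Fin m → Matrix (Fin n) (Fin n) ℝ)
    (B : Matrix (Fin n) (Fin nu) ℝ) (C : Matrix (Fin ny) (Fin n) ℝ)
    (D : Matrix (Fin ny) (Fin nu) ℝ) (τ : Fin m → ℝ) (ξ : ℝ) (lam : ℂ) :
    Matrix (Fin n ⊕ Fin n) (Fin n ⊕ Fin n) ℂ :=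
  lam • (1 : Matrix (Fin n ⊕ Fin n) (Fin n ⊕ Fin n) ℂ)
    - (Mzero A0 B C D ξ).map Complex.ofReal
    - ∑ i : Fin m, (Complex.exp (-lam * (τ i : ℂ)) • (Mpos (A i)).map Complex.ofReal
        + Complex.exp (lam * (τ i : ℂ)) • (Mneg (A i)).map Complex.ofReal)

/-- `A(λ) = λI − A₀ − Σᵢ Aᵢ e^{−λτᵢ}`. -/
def Amat (A0 : Matrix (Fin n) (Fin n) ℝ) (A : Fin m → Matrix (Fin n) (Fin n) ℝ)
    (τ : Fin m → ℝ) (lam : ℂ) : Matrix (Fin n) (Fin n) ℂ :=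
  lam • (1 : Matrix (Fin n) (Fin n) ℂ) - A0.map Complex.ofReal
    - ∑ i : Fin m, Complex.exp (-lam * (τ i : ℂ)) • (A i).map Complex.ofReal

/-- The transfer function `G(λ) = C A(λ)⁻¹ B + D`. -/
def Gmat (A0 : Matrix (Fin n) (Fin n) ℝ) (A : Fin m → Matrix (Fin n) (Fin n) ℝ)
    (B : Matrix (Fin n) (Fin nu) ℝ) (C : Matrix (Fin ny) (Fin n) ℝ)
    (D : Matrix (Fin ny) (Fin nu) ℝ) (τ : Fin m → ℝ) (lam : ℂ) :
    Matrix (Fin ny) (Fin nu) ℂ :=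
  C.map Complex.ofReal * (Amat A0 A τ lam)⁻¹ * B.map Complex.ofReal + D.map Complex.ofReal

/-- `τ_max`, the maximum of the delays. -/
def tauMax [NeZero m] (τ : Fin m → ℝ) : ℝ :=
  Finset.univ.sup' Finset.univ_nonempty τ

/-- `λ` is an eigenvalue of the infinite-dimensional operator `L_ξ`: there is a continuously
differentiable, not identically zero function `u : [−τ_max, τ_max] → ℂ^{2n}` with
`u′(t) = λ u(t)` on the interval and `u′(0) = M₀ u(0) + Σᵢ (Mᵢ u(−τᵢ) + M₋ᵢ u(τᵢ))`. -/
def IsEigLxi [NeZero m] (A0 : Matrix (Fin n) (Fin n) ℝ) (A : Fin m → Matrix (Fin n) (Fin n) ℝ)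
    (B : Matrix (Fin n) (Fin nu) ℝ) (C : Matrix (Fin ny) (Fin n) ℝ)
    (D : Matrix (Fin ny) (Fin nu) ℝ) (τ : Fin m → ℝ) (ξ : ℝ) (lam : ℂ) : Prop :=
  ∃ u : ℝ → (Fin n ⊕ Fin n → ℂ),
    (∀ t ∈ Set.Icc (-(tauMax τ)) (tauMax τ),
      HasDerivWithinAt u (lam • u t) (Set.Icc (-(tauMax τ)) (tauMax τ)) t) ∧
    (∃ t ∈ Set.Icc (-(tauMax τ)) (tauMax τ), u t ≠ 0) ∧
    lam • u 0 = (Mzero A0 B C D ξ).map Complex.ofReal *ᵥ u 0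
      + ∑ i : Fin m, ((Mpos (A i)).map Complex.ofReal *ᵥ u (-(τ i))
          + (Mneg (A i)).map Complex.ofReal *ᵥ u (τ i))

variable {k l : ℕ}

/-- map by ofReal of a real matrix, conj-transpose. -/
lemma rmap_conjT (M : Matrix (Fin k) (Fin l) ℝ) :
    (M.map Complex.ofReal)ᴴ = Mᵀ.map Complex.ofReal := by
  ext i j
  simp [conjTranspose_apply]

lemma rmap_mul {k l o : ℕ} (M : Matrix (Fin k) (Fin l) ℝ) (N : Matrix (Fin l) (Fin o) ℝ) :
    (M * N).map Complex.ofReal = M.map Complex.ofReal * N.map Complex.ofReal := by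
  ext i j
  simp [Matrix.mul_apply]

lemma rmap_one : ((1 : Matrix (Fin k) (Fin k) ℝ)).map Complex.ofReal = 1 := by
  ext i j
  by_cases h : i = j <;> simp [Matrix.one_apply, h]

lemma rmap_smul (r : ℝ) (M : Matrix (Fin k) (Fin l) ℝ) :
    ((r • M).map Complex.ofReal) = (r : ℂ) • M.map Complex.ofReal := by
  ext i j
  simp

lemma rmap_neg (M : Matrix (Fin k) (Fin l) ℝ) :
    ((-M).map Complex.ofReal) = -(M.map Complex.ofReal) := by
  ext i j; simp

lemma rmap_add (M N : Matrix (Fin k) (Fin l) ℝ) :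
    ((M + N).map Complex.ofReal) = M.map Complex.ofReal + N.map Complex.ofReal := by
  ext i j; simp

lemma rmap_sub (M N : Matrix (Fin k) (Fin l) ℝ) :
    ((M - N).map Complex.ofReal) = M.map Complex.ofReal - N.map Complex.ofReal := by
  ext i j; simp

/-- inverse pair for the complexification of an invertible real matrix -/
lemma rmap_inv_mul {M : Matrix (Fin k) (Fin k) ℝ} (h : IsUnit M) :
    (M⁻¹.map Complex.ofReal) * (M.map Complex.ofReal) = 1 := by
  rw [← rmap_mul, Matrix.nonsing_inv_mul _ ((Matrix.isUnit_iff_isUnit_det _).mp h), rmap_one]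

lemma rmap_mul_inv {M : Matrix (Fin k) (Fin k) ℝ} (h : IsUnit M) :
    (M.map Complex.ofReal) * (M⁻¹.map Complex.ofReal) = 1 := by
  rw [← rmap_mul, Matrix.mul_nonsing_inv _ ((Matrix.isUnit_iff_isUnit_det _).mp h), rmap_one]

/-- `D Dᵀ − ξ² I` is invertible whenever `Dᵀ D − ξ² I` is, for `ξ ≠ 0`. -/
lemma isUnit_DxiT {ny nu : ℕ} (D : Matrix (Fin ny) (Fin nu) ℝ) {ξ : ℝ} (hξ : ξ ≠ 0)
    (h : IsUnit (Dᵀ * D - ξ ^ 2 • (1 : Matrix (Fin nu) (Fin nu) ℝ))) :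
    IsUnit (D * Dᵀ - ξ ^ 2 • (1 : Matrix (Fin ny) (Fin ny) ℝ)) := by
  have hξ2 : (ξ : ℝ) ^ 2 ≠ 0 := pow_ne_zero _ hξ
  have key : ∀ (a b : ℕ) (M : Matrix (Fin a) (Fin b) ℝ) (N : Matrix (Fin b) (Fin a) ℝ),
      M * N - ξ ^ 2 • (1 : Matrix (Fin a) (Fin a) ℝ)
        = (-ξ^2) • ((1 : Matrix (Fin a) (Fin a) ℝ) - ((ξ^2)⁻¹ • M) * N) := by
    intro a b M N
    rw [Matrix.smul_mul, smul_sub, smul_smul, neg_mul, mul_inv_cancel₀ hξ2, neg_smul,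
      neg_smul, one_smul]
    abel
  rw [key] at h ⊢
  rw [Matrix.isUnit_iff_isUnit_det, Matrix.det_smul] at h ⊢
  rw [isUnit_iff_ne_zero, mul_ne_zero_iff] at h ⊢
  refine ⟨pow_ne_zero _ (neg_ne_zero.mpr hξ2), ?_⟩
  have h2 := h.2
  rwa [Matrix.det_one_sub_mul_comm, Matrix.mul_smul, ← Matrix.smul_mul] at h2

variable {α β γ : Type*}

lemma elim_smul {ι κ : Type*} (c : ℂ) (a : ι → ℂ) (b : κ → ℂ) :
    c • Sum.elim a b = Sum.elim (c • a) (c • b) := by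
  funext x; cases x <;> rfl

lemma elim_add {ι κ : Type*} (a c : ι → ℂ) (b d : κ → ℂ) :
    Sum.elim a b + Sum.elim c d = Sum.elim (a + c) (b + d) := by
  funext x; cases x <;> rfl

lemma elim_sum {ι κ M : Type*} [Fintype M] (f : M → ι → ℂ) (g : M → κ → ℂ) :
    ∑ i : M, Sum.elim (f i) (g i) = Sum.elim (∑ i, f i) (∑ i, g i) := by
  funext x
  cases x <;> simp [Finset.sum_apply]

lemma elim_eq_elim_iff {ι κ : Type*} (a c : ι → ℂ) (b d : κ → ℂ) :
    Sum.elim a b = Sum.elim c d ↔ a = c ∧ b = d := by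
  constructor
  · intro h
    constructor
    · funext i; exact congrFun h (Sum.inl i)
    · funext i; exact congrFun h (Sum.inr i)
  · rintro ⟨rfl, rfl⟩; rfl

/-- a solution of `u' = λ u` on an interval containing `0` is `exp (λ t) • u 0`. -/
lemma ode_solution {E : Type*} [NormedAddCommGroup E] [NormedSpace ℂ E] {T : ℝ} (hT : 0 ≤ T)
    {lam : ℂ} {u : ℝ → E}
    (hu : ∀ t ∈ Set.Icc (-T) T,
      HasDerivWithinAt u (lam • u t) (Set.Icc (-T) T) t) :
    ∀ t ∈ Set.Icc (-T) T, u t = Complex.exp (lam * t) • u 0 := by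
  set s : Set ℝ := Set.Icc (-T) T with hs
  have h0 : (0 : ℝ) ∈ s := ⟨neg_nonpos.mpr hT, hT⟩
  have hconv : Convex ℝ s := convex_Icc _ _
  set g : ℝ → E := fun t => Complex.exp (-lam * t) • u t with hg
  have hgderiv : ∀ t ∈ s, HasDerivWithinAt g 0 s t := by
    intro t ht
    have hc : HasDerivAt (fun y : ℝ => Complex.exp (-lam * y))
        (Complex.exp (-lam * t) * -lam) t := by
      have : HasDerivAt (fun z : ℂ => Complex.exp (-lam * z))
          (Complex.exp (-lam * (t : ℂ)) * -lam) (t : ℂ) := by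
        simpa using ((hasDerivAt_id (t : ℂ)).const_mul (-lam)).cexp
      exact this.comp_ofReal
    have := (hc.hasDerivWithinAt (s := s)).smul (hu t ht)
    have h2 : Complex.exp (-lam * t) • (lam • u t) + (Complex.exp (-lam * t) * -lam) • u t
        = 0 := by
      rw [smul_smul]
      rw [mul_comm (Complex.exp (-lam * t)) lam] at *
      rw [← add_smul]
      ring_nf
      simp
    rw [h2] at this
    exact this
  have hconst : ∀ t ∈ s, g t = g 0 := by
    intro t ht
    have key := hconv.norm_image_sub_le_of_norm_hasFDerivWithin_le
      (f := g) (f' := fun _ => (0 : ℝ →L[ℝ] E)) (C := 0)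
      (fun x hx => by
        have h := (hgderiv x hx).hasFDerivWithinAt
        rwa [ContinuousLinearMap.toSpanSingleton_zero] at h) (fun x hx => by simp) h0 ht
    have : ‖g t - g 0‖ ≤ 0 := by simpa using key
    have := le_antisymm this (norm_nonneg _)
    rwa [norm_eq_zero, sub_eq_zero] at this
  intro t ht
  have h1 : Complex.exp (-lam * t) • u t = u 0 := by
    have := hconst t ht
    simp only [hg] at this
    simpa using this
  have h2 := congrArg (fun v => Complex.exp (lam * t) • v) h1
  simp only [smul_smul, ← Complex.exp_add] at h2
  have h3 : lam * t + -lam * t = 0 := by ring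
  rw [h3, Complex.exp_zero, one_smul] at h2
  exact h2

lemma eig_iff_vec [NeZero m] (A0 : Matrix (Fin n) (Fin n) ℝ) (A : Fin m → Matrix (Fin n) (Fin n) ℝ)
    (B : Matrix (Fin n) (Fin nu) ℝ) (C : Matrix (Fin ny) (Fin n) ℝ)
    (D : Matrix (Fin ny) (Fin nu) ℝ) (τ : Fin m → ℝ) (hτ : ∀ i, 0 ≤ τ i)
    (ξ : ℝ) (lam : ℂ) :
    IsEigLxi A0 A B C D τ ξ lam ↔
    ∃ v : (Fin n ⊕ Fin n → ℂ), v ≠ 0 ∧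
      lam • v = (Mzero A0 B C D ξ).map Complex.ofReal *ᵥ v
        + ∑ i : Fin m, (Complex.exp (-lam * (τ i : ℂ)) • ((Mpos (A i)).map Complex.ofReal *ᵥ v)
            + Complex.exp (lam * (τ i : ℂ)) • ((Mneg (A i)).map Complex.ofReal *ᵥ v)) := by
  set T := tauMax τ with hTdef
  have hτT : ∀ i, τ i ≤ T := fun i => Finset.le_sup' τ (Finset.mem_univ i)
  have i0 : Fin m := ⟨0, Nat.pos_of_ne_zero (NeZero.ne m)⟩
  have hT0 : 0 ≤ T := le_trans (hτ i0) (hτT i0)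
  have h0mem : (0 : ℝ) ∈ Set.Icc (-T) T := ⟨neg_nonpos.mpr hT0, hT0⟩
  have hmem_neg : ∀ i, (-(τ i)) ∈ Set.Icc (-T) T :=
    fun i => ⟨neg_le_neg (hτT i), le_trans (neg_nonpos.mpr (hτ i)) hT0⟩
  have hmem_pos : ∀ i, (τ i) ∈ Set.Icc (-T) T :=
    fun i => ⟨le_trans (neg_nonpos.mpr hT0) (hτ i), hτT i⟩
  have hcast : ∀ r : ℝ, Complex.exp (lam * ((-r : ℝ) : ℂ)) = Complex.exp (-lam * (r : ℂ)) := by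
    intro r
    push_cast
    ring_nf
  constructor
  · rintro ⟨u, hderiv, ⟨t₀, ht₀, hne⟩, heq⟩
    have hexp := ode_solution hT0 hderiv
    have u0ne : u 0 ≠ 0 := by
      intro h
      apply hne
      rw [hexp t₀ ht₀, h, smul_zero]
    refine ⟨u 0, u0ne, ?_⟩
    have hsum : ∀ i : Fin m,
        Complex.exp (-lam * (τ i : ℂ)) • ((Mpos (A i)).map Complex.ofReal *ᵥ u 0)
          + Complex.exp (lam * (τ i : ℂ)) • ((Mneg (A i)).map Complex.ofReal *ᵥ u 0)
        = (Mpos (A i)).map Complex.ofReal *ᵥ u (-(τ i))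
          + (Mneg (A i)).map Complex.ofReal *ᵥ u (τ i) := by
      intro i
      rw [hexp (-(τ i)) (hmem_neg i), hexp (τ i) (hmem_pos i), hcast,
        Matrix.mulVec_smul, Matrix.mulVec_smul]
    calc lam • u 0 = (Mzero A0 B C D ξ).map Complex.ofReal *ᵥ u 0
        + ∑ i : Fin m, ((Mpos (A i)).map Complex.ofReal *ᵥ u (-(τ i))
            + (Mneg (A i)).map Complex.ofReal *ᵥ u (τ i)) := heq
      _ = _ := by rw [Finset.sum_congr rfl (fun i _ => (hsum i).symm)]
  · rintro ⟨v, hv, heq⟩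
    refine ⟨fun t => Complex.exp (lam * t) • v, ?_, ?_, ?_⟩
    · intro t _
      have hc : HasDerivAt (fun y : ℝ => Complex.exp (lam * y))
          (Complex.exp (lam * t) * lam) t := by
        have : HasDerivAt (fun z : ℂ => Complex.exp (lam * z))
            (Complex.exp (lam * (t : ℂ)) * lam) (t : ℂ) := by
          simpa using ((hasDerivAt_id (t : ℂ)).const_mul lam).cexp
        exact this.comp_ofReal
      have := (hc.smul_const v).hasDerivWithinAt (s := Set.Icc (-T) T)
      refine this.congr_deriv ?_
      show _ = lam • (Complex.exp (lam * t) • v)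
      rw [smul_smul, mul_comm]
    · exact ⟨0, h0mem, by simp [hv]⟩
    · simp only [Complex.ofReal_zero, mul_zero, Complex.exp_zero, one_smul]
      have hsum : ∀ i : Fin m,
          (Mpos (A i)).map Complex.ofReal *ᵥ (Complex.exp (lam * ((-(τ i) : ℝ) : ℂ)) • v)
            + (Mneg (A i)).map Complex.ofReal *ᵥ (Complex.exp (lam * ((τ i : ℝ) : ℂ)) • v)
          = Complex.exp (-lam * (τ i : ℂ)) • ((Mpos (A i)).map Complex.ofReal *ᵥ v)
            + Complex.exp (lam * (τ i : ℂ)) • ((Mneg (A i)).map Complex.ofReal *ᵥ v) := by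
        intro i
        rw [hcast, Matrix.mulVec_smul, Matrix.mulVec_smul]
      rw [Finset.sum_congr rfl (fun i _ => hsum i)]
      exact heq

lemma eq_iff_eq_of_sub_eq {V : Type*} [AddCommGroup V] {a b c d : V} (h : a - b = c - d) :
    a = b ↔ c = d := by
  constructor
  · intro h2
    have : c - d = 0 := by rw [← h, h2, sub_self]
    exact sub_eq_zero.mp this
  · intro h2
    have : a - b = 0 := by rw [h, h2, sub_self]
    exact sub_eq_zero.mp this

lemma elim_zero {ι κ : Type*} : Sum.elim (0 : ι → ℂ) (0 : κ → ℂ) = 0 := by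
  funext x; cases x <;> rfl

lemma aux_q {ny nu : ℕ} (Dc : Matrix (Fin ny) (Fin nu) ℂ) (DξT EξT : Matrix (Fin ny) (Fin ny) ℂ)
    (ξ2 : ℂ) (hDT : DξT = Dc * Dcᴴ - ξ2 • 1) (hE : EξT * DξT = 1)
    (Cx y : Fin ny → ℂ) (u : Fin nu → ℂ) (bp : Fin nu → ℂ)
    (hy : y = Cx + Dc *ᵥ u) (hbp : bp = ξ2 • u - Dcᴴ *ᵥ y) :
    ξ2 • (EξT *ᵥ (Cx)) + EξT *ᵥ (Dc *ᵥ bp) = -y := by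
  have h1 : DξT *ᵥ (-y) = ξ2 • Cx + Dc *ᵥ bp := by
    subst hbp hy hDT
    simp only [Matrix.mulVec_neg, Matrix.mulVec_add, Matrix.mulVec_sub, Matrix.mulVec_smul,
      Matrix.sub_mulVec, Matrix.smul_mulVec, Matrix.one_mulVec,
      ← Matrix.mulVec_mulVec, smul_add, smul_sub]
    abel
  calc ξ2 • (EξT *ᵥ Cx) + EξT *ᵥ (Dc *ᵥ bp)
      = EξT *ᵥ (ξ2 • Cx + Dc *ᵥ bp) := by rw [Matrix.mulVec_add, Matrix.mulVec_smul]
    _ = EξT *ᵥ (DξT *ᵥ (-y)) := by rw [h1]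
    _ = -y := by rw [Matrix.mulVec_mulVec, hE, Matrix.one_mulVec]

lemma E2rhs {n nu ny : ℕ} (Cc : Matrix (Fin ny) (Fin n) ℂ) (Dc : Matrix (Fin ny) (Fin nu) ℂ)
    (Eξ : Matrix (Fin nu) (Fin nu) ℂ) (EξT : Matrix (Fin ny) (Fin ny) ℂ)
    (Bc : Matrix (Fin n) (Fin nu) ℂ) (hDE : Dc * Eξ = EξT * Dc) (ξ2 : ℂ)
    (x p : Fin n → ℂ) :
    -(ξ2 • ((Ccᴴ * EξT * Cc) *ᵥ x)) - (Ccᴴ * Dc * Eξ * Bcᴴ) *ᵥ p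
      = Ccᴴ *ᵥ (-(ξ2 • (EξT *ᵥ (Cc *ᵥ x)) + EξT *ᵥ (Dc *ᵥ (Bcᴴ *ᵥ p)))) := by
  have hDEv : ∀ w, Dc *ᵥ (Eξ *ᵥ w) = EξT *ᵥ (Dc *ᵥ w) := fun w => by
    rw [Matrix.mulVec_mulVec, Matrix.mulVec_mulVec, hDE]
  simp only [← Matrix.mulVec_mulVec, Matrix.mulVec_neg, Matrix.mulVec_add,
    Matrix.mulVec_smul, hDEv]
  abel

lemma sum_mulVec {k l : ℕ} {mm : Type*} [Fintype mm] (f : mm → Matrix (Fin k) (Fin l) ℂ)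
    (x : Fin l → ℂ) : (∑ i, f i) *ᵥ x = ∑ i, f i *ᵥ x :=
  map_sum (Matrix.mulVec.addMonoidHomLeft x) f Finset.univ

lemma vec_iff_sv_abstract {n nu ny m : ℕ}
    (lam ξ2 : ℂ) (hstar : star lam = -lam)
    (τc : Fin m → ℂ) (hτstar : ∀ i, star (τc i) = τc i)
    (Ac A0c : Matrix (Fin n) (Fin n) ℂ) (Aci : Fin m → Matrix (Fin n) (Fin n) ℂ)
    (Bc : Matrix (Fin n) (Fin nu) ℂ) (Cc : Matrix (Fin ny) (Fin n) ℂ)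
    (Dc : Matrix (Fin ny) (Fin nu) ℂ)
    (Eξ : Matrix (Fin nu) (Fin nu) ℂ) (EξT : Matrix (Fin ny) (Fin ny) ℂ)
    (hAc : Ac = lam • 1 - A0c - ∑ i, Complex.exp (-lam * τc i) • Aci i)
    (hAdet : IsUnit Ac.det)
    (hE : (Dcᴴ * Dc - ξ2 • 1) * Eξ = 1) (hE' : Eξ * (Dcᴴ * Dc - ξ2 • 1) = 1)
    (hET : (Dc * Dcᴴ - ξ2 • 1) * EξT = 1) (hET' : EξT * (Dc * Dcᴴ - ξ2 • 1) = 1) :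
    (∃ v : (Fin n ⊕ Fin n → ℂ), v ≠ 0 ∧
       lam • v = (fromBlocks (A0c - Bc * Eξ * Dcᴴ * Cc) (-(Bc * Eξ * Bcᴴ))
           (ξ2 • (Ccᴴ * EξT * Cc)) (-A0cᴴ + Ccᴴ * Dc * Eξ * Bcᴴ)) *ᵥ v
         + ∑ i, (Complex.exp (-lam * τc i) • ((fromBlocks (Aci i) 0 0 0) *ᵥ v)
             + Complex.exp (lam * τc i) • ((fromBlocks 0 0 0 (-(Aci i)ᴴ)) *ᵥ v)))
    ↔ (∃ u : Fin nu → ℂ, u ≠ 0 ∧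
        (Cc * Ac⁻¹ * Bc + Dc)ᴴ *ᵥ ((Cc * Ac⁻¹ * Bc + Dc) *ᵥ u) = ξ2 • u) := by
  set Dξ : Matrix (Fin nu) (Fin nu) ℂ := Dcᴴ * Dc - ξ2 • 1 with hDξdef
  set DξT : Matrix (Fin ny) (Fin ny) ℂ := Dc * Dcᴴ - ξ2 • 1 with hDξTdef
  set Gc : Matrix (Fin ny) (Fin nu) ℂ := Cc * Ac⁻¹ * Bc + Dc with hGcdef
  have hAHdet : IsUnit (Acᴴ).det := by
    rw [Matrix.det_conjTranspose]; exact hAdet.star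
  have hAinvl : Ac⁻¹ * Ac = 1 := Matrix.nonsing_inv_mul _ hAdet
  have hAinvr : Ac * Ac⁻¹ = 1 := Matrix.mul_nonsing_inv _ hAdet
  have hAHinvl : (Acᴴ)⁻¹ * Acᴴ = 1 := Matrix.nonsing_inv_mul _ hAHdet
  have hcanc : ∀ w, Ac⁻¹ *ᵥ (Ac *ᵥ w) = w := fun w => by
    rw [Matrix.mulVec_mulVec, hAinvl, Matrix.one_mulVec]
  have hcancH : ∀ w, (Acᴴ)⁻¹ *ᵥ (Acᴴ *ᵥ w) = w := fun w => by
    rw [Matrix.mulVec_mulVec, hAHinvl, Matrix.one_mulVec]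
  have hEDv : ∀ w, Eξ *ᵥ (Dξ *ᵥ w) = w := fun w => by
    rw [Matrix.mulVec_mulVec, hE', Matrix.one_mulVec]
  have hDEv : ∀ w, Dξ *ᵥ (Eξ *ᵥ w) = w := fun w => by
    rw [Matrix.mulVec_mulVec, hE, Matrix.one_mulVec]
  have hDξv : ∀ w, Dξ *ᵥ w = Dcᴴ *ᵥ (Dc *ᵥ w) - ξ2 • w := fun w => by
    rw [hDξdef, Matrix.sub_mulVec, Matrix.smul_mulVec, Matrix.one_mulVec,
      Matrix.mulVec_mulVec]
  have hDEc : Dc * Eξ = EξT * Dc := by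
    have h1 : DξT * Dc = Dc * Dξ := by
      rw [hDξTdef, hDξdef]
      simp only [Matrix.sub_mul, Matrix.mul_sub, Matrix.smul_mul, Matrix.mul_smul,
        Matrix.one_mul, Matrix.mul_one, Matrix.mul_assoc]
    calc Dc * Eξ = (EξT * DξT) * (Dc * Eξ) := by rw [hET', Matrix.one_mul]
      _ = EξT * ((DξT * Dc) * Eξ) := by simp only [Matrix.mul_assoc]
      _ = EξT * (Dc * (Dξ * Eξ)) := by rw [h1, Matrix.mul_assoc]
      _ = EξT * Dc := by rw [hE, Matrix.mul_one]
  have hGH : Bcᴴ * (Acᴴ)⁻¹ * Ccᴴ = Gcᴴ - Dcᴴ := by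
    rw [hGcdef, conjTranspose_add, conjTranspose_mul, conjTranspose_mul,
      Matrix.conjTranspose_nonsing_inv, add_sub_cancel_right, Matrix.mul_assoc]
  have hGHv : ∀ w, Bcᴴ *ᵥ ((Acᴴ)⁻¹ *ᵥ (Ccᴴ *ᵥ w)) = Gcᴴ *ᵥ w - Dcᴴ *ᵥ w := fun w => by
    rw [Matrix.mulVec_mulVec, Matrix.mulVec_mulVec, hGH, Matrix.sub_mulVec]
  have hGv : ∀ w, Gc *ᵥ w = Cc *ᵥ (Ac⁻¹ *ᵥ (Bc *ᵥ w)) + Dc *ᵥ w := fun w => by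
    rw [hGcdef, Matrix.add_mulVec, ← Matrix.mulVec_mulVec, ← Matrix.mulVec_mulVec]
  have hAmv : ∀ x : Fin n → ℂ, Ac *ᵥ x
      = lam • x - A0c *ᵥ x - ∑ i, Complex.exp (-lam * τc i) • (Aci i *ᵥ x) := by
    intro x
    rw [hAc, Matrix.sub_mulVec, Matrix.sub_mulVec, Matrix.smul_mulVec,
      Matrix.one_mulVec, _root_.sum_mulVec]
    simp only [Matrix.smul_mulVec]
  have hstar_exp : ∀ i, star (Complex.exp (-lam * τc i)) = Complex.exp (lam * τc i) := by
    intro i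
    calc star (Complex.exp (-lam * τc i))
        = Complex.exp (star (-lam * τc i)) := (Complex.exp_conj _).symm
      _ = Complex.exp (lam * τc i) := by rw [star_mul', star_neg, hstar, hτstar, neg_neg]
  have hAH : Acᴴ = (-lam) • 1 - A0cᴴ - ∑ i, Complex.exp (lam * τc i) • (Aci i)ᴴ := by
    rw [hAc]
    simp only [conjTranspose_sub, Matrix.conjTranspose_smul, conjTranspose_one,
      Matrix.conjTranspose_sum, hstar, hstar_exp]
  have hAHmv : ∀ p : Fin n → ℂ, Acᴴ *ᵥ p
      = -(lam • p) - A0cᴴ *ᵥ p - ∑ i, Complex.exp (lam * τc i) • ((Aci i)ᴴ *ᵥ p) := by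
    intro p
    rw [hAH, Matrix.sub_mulVec, Matrix.sub_mulVec, Matrix.smul_mulVec,
      Matrix.one_mulVec, _root_.sum_mulVec, neg_smul]
    simp only [Matrix.smul_mulVec]
  constructor
  · rintro ⟨v, hvne, hveq⟩
    set x : Fin n → ℂ := fun j => v (Sum.inl j) with hxdef
    set p : Fin n → ℂ := fun j => v (Sum.inr j) with hpdef
    have hv : v = Sum.elim x p := by funext j; cases j <;> rfl
    rw [hv] at hveq hvne
    simp only [fromBlocks_mulVec, Matrix.zero_mulVec, Matrix.neg_mulVec, Matrix.add_mulVec,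
      Matrix.sub_mulVec, Matrix.smul_mulVec, add_zero, zero_add, smul_zero, smul_neg,
      elim_smul, elim_add, elim_sum, Finset.sum_neg_distrib, Sum.elim_comp_inl,
      Sum.elim_comp_inr] at hveq
    rw [elim_eq_elim_iff] at hveq
    obtain ⟨h1, h2⟩ := hveq
    have hxp : ¬(x = 0 ∧ p = 0) := by
      rintro ⟨hx0, hp0⟩
      exact hvne (by rw [hx0, hp0, elim_zero])
    have hE1 : Ac *ᵥ x = -((Bc * Eξ * Dcᴴ * Cc) *ᵥ x) - (Bc * Eξ * Bcᴴ) *ᵥ p := by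
      rw [hAmv x, h1]
      abel
    have hE2 : Acᴴ *ᵥ p = -(ξ2 • ((Ccᴴ * EξT * Cc) *ᵥ x)) - (Ccᴴ * Dc * Eξ * Bcᴴ) *ᵥ p := by
      rw [hAHmv p, h2]
      abel
    set u : Fin nu → ℂ := -(Eξ *ᵥ (Dcᴴ *ᵥ (Cc *ᵥ x) + Bcᴴ *ᵥ p)) with hudef
    have hBu : Ac *ᵥ x = Bc *ᵥ u := by
      rw [hE1, hudef]
      simp only [Matrix.mulVec_neg, Matrix.mulVec_add, ← Matrix.mulVec_mulVec]
      abel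
    have hDzu : Dξ *ᵥ u = -(Dcᴴ *ᵥ (Cc *ᵥ x) + Bcᴴ *ᵥ p) := by
      rw [hudef, Matrix.mulVec_neg, hDEv]
    have hune : u ≠ 0 := by
      intro h0
      have hx0 : x = 0 := by
        have hb := hBu
        rw [h0, Matrix.mulVec_zero] at hb
        have := congrArg (fun w => Ac⁻¹ *ᵥ w) hb
        simpa [hcanc x] using this
      have hz0 : Bcᴴ *ᵥ p = 0 := by
        have hd := hDzu
        rw [h0, Matrix.mulVec_zero, hx0] at hd
        simpa [Matrix.mulVec_zero] using hd.symm
      have hp0 : p = 0 := by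
        have h := hE2
        rw [hx0] at h
        simp only [Matrix.mulVec_zero, smul_zero, neg_zero, zero_sub] at h
        rw [← Matrix.mulVec_mulVec, hz0, Matrix.mulVec_zero, neg_zero] at h
        have := congrArg (fun w => (Acᴴ)⁻¹ *ᵥ w) h
        simpa [hcancH p, Matrix.mulVec_zero] using this
      exact hxp ⟨hx0, hp0⟩
    have hxval : x = Ac⁻¹ *ᵥ (Bc *ᵥ u) := by rw [← hBu, hcanc]
    set y : Fin ny → ℂ := Cc *ᵥ x + Dc *ᵥ u with hy
    have hGu : Gc *ᵥ u = y := by rw [hGv, ← hxval, hy]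
    have hBp : Bcᴴ *ᵥ p = ξ2 • u - Dcᴴ *ᵥ y := by
      have hz : Bcᴴ *ᵥ p = -(Dξ *ᵥ u) - Dcᴴ *ᵥ (Cc *ᵥ x) := by
        rw [hDzu]; abel
      rw [hz, hDξv u, hy, Matrix.mulVec_add]
      abel
    have hq := aux_q Dc DξT EξT ξ2 hDξTdef hET' (Cc *ᵥ x) y u (Bcᴴ *ᵥ p) hy hBp
    have hACp : Acᴴ *ᵥ p = Ccᴴ *ᵥ y := by
      rw [hE2, E2rhs Cc Dc Eξ EξT Bc hDEc ξ2 x p, hq, neg_neg]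
    have hpval : p = (Acᴴ)⁻¹ *ᵥ (Ccᴴ *ᵥ y) := by rw [← hACp, hcancH]
    have hGHy : Gcᴴ *ᵥ y = ξ2 • u := by
      have h3 : Bcᴴ *ᵥ p = Gcᴴ *ᵥ y - Dcᴴ *ᵥ y := by
        rw [hpval]
        exact hGHv y
      rw [hBp] at h3
      have h5 := congrArg (fun w => w + Dcᴴ *ᵥ y) h3
      simp only [sub_add_cancel] at h5
      exact h5.symm
    exact ⟨u, hune, by rw [hGu, hGHy]⟩
  · rintro ⟨u, hune, hGG⟩
    set y : Fin ny → ℂ := Gc *ᵥ u with hydef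
    set x : Fin n → ℂ := Ac⁻¹ *ᵥ (Bc *ᵥ u) with hxdef
    set p : Fin n → ℂ := (Acᴴ)⁻¹ *ᵥ (Ccᴴ *ᵥ y) with hpdef
    have hAx : Ac *ᵥ x = Bc *ᵥ u := by
      rw [hxdef, Matrix.mulVec_mulVec, hAinvr, Matrix.one_mulVec]
    have hy2 : y = Cc *ᵥ x + Dc *ᵥ u := by
      rw [hydef, hGv u, ← hxdef]
    have hAHp : Acᴴ *ᵥ p = Ccᴴ *ᵥ y := by
      rw [hpdef, Matrix.mulVec_mulVec, Matrix.mul_nonsing_inv _ hAHdet, Matrix.one_mulVec]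
    have hBp : Bcᴴ *ᵥ p = ξ2 • u - Dcᴴ *ᵥ y := by
      rw [hpdef, hGHv, hydef, hGG]
    have hzeq : Dcᴴ *ᵥ (Cc *ᵥ x) + Bcᴴ *ᵥ p = -(Dξ *ᵥ u) := by
      have hCx : Cc *ᵥ x = y - Dc *ᵥ u := by rw [hy2]; abel
      rw [hCx, hBp, hDξv u, Matrix.mulVec_sub]
      abel
    have hq := aux_q Dc DξT EξT ξ2 hDξTdef hET' (Cc *ᵥ x) y u (Bcᴴ *ᵥ p) hy2 hBp
    have hE1 : Ac *ᵥ x = -((Bc * Eξ * Dcᴴ * Cc) *ᵥ x) - (Bc * Eξ * Bcᴴ) *ᵥ p := by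
      have hfold : -((Bc * Eξ * Dcᴴ * Cc) *ᵥ x) - (Bc * Eξ * Bcᴴ) *ᵥ p
          = -(Bc *ᵥ (Eξ *ᵥ (Dcᴴ *ᵥ (Cc *ᵥ x) + Bcᴴ *ᵥ p))) := by
        simp only [Matrix.mulVec_add, ← Matrix.mulVec_mulVec]
        abel
      rw [hfold, hzeq]
      simp only [Matrix.mulVec_neg, neg_neg]
      rw [hEDv, hAx]
    have hE2 : Acᴴ *ᵥ p = -(ξ2 • ((Ccᴴ * EξT * Cc) *ᵥ x)) - (Ccᴴ * Dc * Eξ * Bcᴴ) *ᵥ p := by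
      rw [E2rhs Cc Dc Eξ EξT Bc hDEc ξ2 x p, hq, neg_neg, hAHp]
    refine ⟨Sum.elim x p, ?_, ?_⟩
    · intro h0
      have hx0 : x = 0 := by funext j; exact congrFun h0 (Sum.inl j)
      have hp0 : p = 0 := by funext j; exact congrFun h0 (Sum.inr j)
      rw [hx0, hp0] at hzeq
      simp only [Matrix.mulVec_zero, add_zero] at hzeq
      have hu0 : Dξ *ᵥ u = 0 := by
        have := congrArg Neg.neg hzeq
        simpa using this.symm
      have : u = 0 := by
        have := congrArg (fun w => Eξ *ᵥ w) hu0
        simpa [hEDv u, Matrix.mulVec_zero] using this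
      exact hune this
    · simp only [fromBlocks_mulVec, Matrix.zero_mulVec, Matrix.neg_mulVec, Matrix.add_mulVec,
        Matrix.sub_mulVec, Matrix.smul_mulVec, add_zero, zero_add, smul_zero, smul_neg,
        elim_smul, elim_add, elim_sum, Finset.sum_neg_distrib, Sum.elim_comp_inl,
        Sum.elim_comp_inr]
      rw [elim_eq_elim_iff]
      constructor
      · have hr : lam • x = (Ac *ᵥ x) + A0c *ᵥ x
            + ∑ i, Complex.exp (-lam * τc i) • (Aci i *ᵥ x) := by
          rw [hAmv x]; abel
        rw [hr, hE1]
        abel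
      · have hr : lam • p = -(Acᴴ *ᵥ p) - A0cᴴ *ᵥ p
            - ∑ i, Complex.exp (lam * τc i) • ((Aci i)ᴴ *ᵥ p) := by
          rw [hAHmv p]; abel
        rw [hr, hE2]
        abel

/-- for `ξ > 0` with `D_ξ` invertible and `ω ≥ 0` with `A(iω)` invertible,
`ξ` is a singular value of `G(iω)` iff `λ = iω` is an eigenvalue of `L_ξ`. -/
theorem singular_value_iff_eig_Lxi [NeZero n] [NeZero nu] [NeZero ny] [NeZero m]
    (A0 : Matrix (Fin n) (Fin n) ℝ) (A : Fin m → Matrix (Fin n) (Fin n) ℝ)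
    (B : Matrix (Fin n) (Fin nu) ℝ) (C : Matrix (Fin ny) (Fin n) ℝ)
    (D : Matrix (Fin ny) (Fin nu) ℝ) (τ : Fin m → ℝ) (hτ : ∀ i, 0 ≤ τ i)
    (ξ : ℝ) (hξ : 0 < ξ) (hD : IsUnit (Dxi D ξ))
    (ω : ℝ) (hω : 0 ≤ ω) (hA : IsUnit (Amat A0 A τ (Complex.I * ω))) :
    ((Gmat A0 A B C D τ (Complex.I * ω))ᴴ * Gmat A0 A B C D τ (Complex.I * ω)
        - ((ξ : ℂ) ^ 2) • 1).det = 0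
      ↔ IsEigLxi A0 A B C D τ ξ (Complex.I * ω) := by
  have hτc : ∀ i : Fin m, star ((τ i : ℂ)) = (τ i : ℂ) := fun i => by
    simp [Complex.star_def, Complex.conj_ofReal]
  have hstar : star (Complex.I * (ω : ℂ)) = -(Complex.I * (ω : ℂ)) := by
    simp [Complex.star_def, _root_.map_mul, Complex.conj_I, Complex.conj_ofReal]
  have hξ0 : ξ ≠ 0 := ne_of_gt hξ
  have hD' : IsUnit (Dᵀ * D - ξ ^ 2 • (1 : Matrix (Fin nu) (Fin nu) ℝ)) := hD
  have hDT : IsUnit (DxiT D ξ) := isUnit_DxiT D hξ0 hD'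
  have hDξmap : (Dxi D ξ).map Complex.ofReal
      = (D.map Complex.ofReal)ᴴ * D.map Complex.ofReal - ((ξ : ℂ) ^ 2) • 1 := by
    unfold Dxi
    rw [rmap_sub, rmap_mul, rmap_smul, rmap_one, ← rmap_conjT, Complex.ofReal_pow]
  have hDξTmap : (DxiT D ξ).map Complex.ofReal
      = D.map Complex.ofReal * (D.map Complex.ofReal)ᴴ - ((ξ : ℂ) ^ 2) • 1 := by
    unfold DxiT
    rw [rmap_sub, rmap_mul, rmap_smul, rmap_one, ← rmap_conjT, Complex.ofReal_pow]
  have hE : ((D.map Complex.ofReal)ᴴ * D.map Complex.ofReal - ((ξ : ℂ) ^ 2) • 1)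
      * ((Dxi D ξ)⁻¹).map Complex.ofReal = 1 := by
    rw [← hDξmap]; exact rmap_mul_inv hD
  have hE' : ((Dxi D ξ)⁻¹).map Complex.ofReal
      * ((D.map Complex.ofReal)ᴴ * D.map Complex.ofReal - ((ξ : ℂ) ^ 2) • 1) = 1 := by
    rw [← hDξmap]; exact rmap_inv_mul hD
  have hET : (D.map Complex.ofReal * (D.map Complex.ofReal)ᴴ - ((ξ : ℂ) ^ 2) • 1)
      * ((DxiT D ξ)⁻¹).map Complex.ofReal = 1 := by
    rw [← hDξTmap]; exact rmap_mul_inv hDT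
  have hET' : ((DxiT D ξ)⁻¹).map Complex.ofReal
      * (D.map Complex.ofReal * (D.map Complex.ofReal)ᴴ - ((ξ : ℂ) ^ 2) • 1) = 1 := by
    rw [← hDξTmap]; exact rmap_inv_mul hDT
  have hM0map : (Mzero A0 B C D ξ).map Complex.ofReal
      = fromBlocks
          (A0.map Complex.ofReal - B.map Complex.ofReal * ((Dxi D ξ)⁻¹).map Complex.ofReal
            * (D.map Complex.ofReal)ᴴ * C.map Complex.ofReal)
          (-(B.map Complex.ofReal * ((Dxi D ξ)⁻¹).map Complex.ofReal
            * (B.map Complex.ofReal)ᴴ))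
          (((ξ : ℂ) ^ 2) • ((C.map Complex.ofReal)ᴴ * ((DxiT D ξ)⁻¹).map Complex.ofReal
            * C.map Complex.ofReal))
          (-(A0.map Complex.ofReal)ᴴ + (C.map Complex.ofReal)ᴴ * D.map Complex.ofReal
            * ((Dxi D ξ)⁻¹).map Complex.ofReal * (B.map Complex.ofReal)ᴴ) := by
    unfold Mzero
    rw [fromBlocks_map]
    simp only [rmap_sub, rmap_add, rmap_neg, rmap_mul, rmap_smul, Complex.ofReal_pow,
      ← rmap_conjT]
  have hMpos : ∀ i, (Mpos (A i)).map Complex.ofReal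
      = fromBlocks ((A i).map Complex.ofReal) 0 0 0 := by
    intro i
    unfold Mpos
    rw [fromBlocks_map]
    congr 1 <;> try (ext a b; simp)
  have hMneg : ∀ i, (Mneg (A i)).map Complex.ofReal
      = fromBlocks 0 0 0 (-((A i).map Complex.ofReal)ᴴ) := by
    intro i
    unfold Mneg
    rw [fromBlocks_map, rmap_neg, ← rmap_conjT]
    congr 1 <;> try (ext a b; simp)
  rw [eig_iff_vec A0 A B C D τ hτ ξ (Complex.I * (ω : ℂ))]
  have hdet0 : ((Gmat A0 A B C D τ (Complex.I * ω))ᴴ * Gmat A0 A B C D τ (Complex.I * ω)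
      - ((ξ : ℂ) ^ 2) • 1).det = 0
    ↔ ∃ u : Fin nu → ℂ, u ≠ 0 ∧
        (Gmat A0 A B C D τ (Complex.I * ω))ᴴ *ᵥ (Gmat A0 A B C D τ (Complex.I * ω) *ᵥ u)
          = ((ξ : ℂ) ^ 2) • u := by
    rw [← Matrix.exists_mulVec_eq_zero_iff]
    apply exists_congr; intro u
    apply and_congr_right; intro _
    rw [Matrix.sub_mulVec, Matrix.smul_mulVec, Matrix.one_mulVec, sub_eq_zero,
      ← Matrix.mulVec_mulVec]
  rw [hdet0]
  simp only [hM0map, hMpos, hMneg]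
  have habs := vec_iff_sv_abstract (Complex.I * (ω : ℂ)) ((ξ : ℂ) ^ 2) hstar
    (fun i => (τ i : ℂ)) hτc
    (Amat A0 A τ (Complex.I * (ω : ℂ))) (A0.map Complex.ofReal)
    (fun i => (A i).map Complex.ofReal)
    (B.map Complex.ofReal) (C.map Complex.ofReal) (D.map Complex.ofReal)
    (((Dxi D ξ)⁻¹).map Complex.ofReal) (((DxiT D ξ)⁻¹).map Complex.ofReal)
    rfl ((Matrix.isUnit_iff_isUnit_det _).mp hA) hE hE' hET hET'
  simp only [Gmat]
  exact habs.symm
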